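/- Let μ₀ be a probability measure on ℝ with M(λ) < ∞ for all λ and with w := sup(supp μ₀) = ∞. With μ_β the exponential tilt of μ₀, one has lim_{β→∞} h(μ_β | μ₀) = ∞. -/

import Mathlib

open MeasureTheory Filter Real Set
open scoped ENNReal NNReal Topology

open Classical in
/-- Relative entropy `h(μ | ν) = ∫ log(dμ/dν) dμ` when `μ ≪ ν` (and the integral exists),
and `+∞` otherwise. -/
noncomputable def relEnt {α : Type*} [MeasurableSpace α] (μ ν : Measure α) : ℝ≥0∞ :=
  if μ ≪ ν ∧ Integrable (llr μ ν) μ then ENNReal.ofReal (∫ x, llr μ ν x ∂μ) else ⊤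

section Aux
set_option linter.unusedSectionVars false
variable {μ₀ : Measure ℝ} [IsProbabilityMeasure μ₀]

lemma aux_max_le_exp (x : ℝ) : max x 0 ≤ exp x :=
  max_le (by linarith [Real.add_one_le_exp x]) (exp_pos x).le

lemma aux_abs_le (x : ℝ) : |x| ≤ exp x + exp (-x) := by
  rcases abs_cases x with ⟨h, _⟩ | ⟨h, _⟩
  · rw [h]; linarith [Real.add_one_le_exp x, (exp_pos (-x)).le]
  · rw [h]; linarith [Real.add_one_le_exp (-x), (exp_pos x).le]

lemma integrable_tilted_iff (β : ℝ) {g : ℝ → ℝ} :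
    Integrable g (μ₀.tilted (fun x => β * x)) ↔
      Integrable (fun x => g x * (exp (β * x) / ∫ x, exp (β * x) ∂μ₀)) μ₀ := by
  rw [Measure.tilted, integrable_withDensity_iff]
  · refine integrable_congr (ae_of_all _ fun x => ?_)
    simp only [ENNReal.toReal_ofReal (by positivity :
      (0:ℝ) ≤ exp (β * x) / ∫ x, exp (β * x) ∂μ₀)]
  · exact (measurable_exp.comp (measurable_const.mul measurable_id)).div_const _
      |>.ennreal_ofReal
  · exact ae_of_all _ fun x => ENNReal.ofReal_lt_top

lemma integrable_id_tilted (hM : ∀ lam : ℝ, Integrable (fun x => Real.exp (lam * x)) μ₀)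
    (β : ℝ) : Integrable (fun x => x) (μ₀.tilted (fun x => β * x)) := by
  rw [integrable_tilted_iff β]
  have h : Integrable (fun x => x * exp (β * x)) μ₀ := by
    refine ((hM (β + 1)).add (hM (β - 1))).mono
      ((measurable_id.mul (measurable_exp.comp
        (measurable_const.mul measurable_id))).aestronglyMeasurable)
      (ae_of_all _ fun x => ?_)
    have h1 : |x * exp (β * x)| = |x| * exp (β * x) := by
      rw [abs_mul, abs_of_pos (exp_pos _)]
    rw [Real.norm_eq_abs, h1, Real.norm_eq_abs]
    have h2 : |x| * exp (β * x) ≤ (exp x + exp (-x)) * exp (β * x) :=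
      mul_le_mul_of_nonneg_right (aux_abs_le x) (exp_pos _).le
    have h3 : (exp x + exp (-x)) * exp (β * x) = exp ((β+1)*x) + exp ((β-1)*x) := by
      rw [add_mul, ← exp_add, ← exp_add]; ring_nf
    calc |x| * exp (β*x) ≤ (exp x + exp (-x)) * exp (β * x) := h2
      _ = exp ((β+1)*x) + exp ((β-1)*x) := h3
      _ ≤ |exp ((β+1)*x) + exp ((β-1)*x)| := le_abs_self _
  simpa [mul_div_assoc] using h.div_const (∫ x, exp (β * x) ∂μ₀)

lemma integrable_max_tilted (hM : ∀ lam : ℝ, Integrable (fun x => Real.exp (lam * x)) μ₀)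
    (β : ℝ) : Integrable (fun x => max x 0) (μ₀.tilted (fun x => β * x)) := by
  rw [integrable_tilted_iff β]
  have h : Integrable (fun x => max x 0 * exp (β * x)) μ₀ := by
    refine (hM (β + 1)).mono
      (((measurable_id.max measurable_const).mul (measurable_exp.comp
        (measurable_const.mul measurable_id))).aestronglyMeasurable)
      (ae_of_all _ fun x => ?_)
    rw [Real.norm_eq_abs, Real.norm_eq_abs, abs_mul, abs_of_pos (exp_pos _),
      abs_of_nonneg (le_max_right x 0)]
    calc max x 0 * exp (β * x) ≤ exp x * exp (β * x) :=
          mul_le_mul_of_nonneg_right (aux_max_le_exp x) (exp_pos _).le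
      _ = exp ((β+1)*x) := by rw [← exp_add]; ring_nf
      _ ≤ |exp ((β+1)*x)| := le_abs_self _
  simpa [mul_div_assoc] using h.div_const (∫ x, exp (β * x) ∂μ₀)

lemma integrable_exp_max (hM : ∀ lam : ℝ, Integrable (fun x => Real.exp (lam * x)) μ₀) :
    Integrable (fun x => exp (max x 0)) μ₀ := by
  refine ((hM 1).add (integrable_const 1)).mono
    ((measurable_exp.comp (measurable_id.max measurable_const)).aestronglyMeasurable)
    (ae_of_all _ fun x => ?_)
  rw [Real.norm_eq_abs, abs_of_pos (exp_pos _), Real.norm_eq_abs]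
  rcases le_or_gt x 0 with h | h
  · rw [max_eq_right h]
    calc exp 0 = 1 := exp_zero
      _ ≤ exp (1*x) + 1 := by linarith [(exp_pos (1*x)).le]
      _ ≤ |exp (1*x) + 1| := le_abs_self _
  · rw [max_eq_left h.le]
    calc exp x = exp (1*x) := by ring_nf
      _ ≤ exp (1*x) + 1 := by linarith
      _ ≤ |exp (1*x) + 1| := le_abs_self _

lemma key_lower_bound (hM : ∀ lam : ℝ, Integrable (fun x => Real.exp (lam * x)) μ₀)
    (β : ℝ) :
    (∫ x, max x 0 ∂(μ₀.tilted (fun x => β * x))) - log (∫ x, exp (max x 0) ∂μ₀)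
      ≤ ∫ x, llr (μ₀.tilted (fun x => β * x)) μ₀ x ∂(μ₀.tilted (fun x => β * x)) := by
  set μβ := μ₀.tilted (fun x => β * x) with hμβ
  haveI : IsProbabilityMeasure μβ := isProbabilityMeasure_tilted (hM β)
  have hac : μβ ≪ μ₀ := tilted_absolutelyContinuous μ₀ _
  have hMpos : 0 < ∫ x, exp (β * x) ∂μ₀ := integral_exp_pos (hM β)
  have hZpos : 0 < ∫ x, exp (max x 0) ∂μ₀ := integral_exp_pos (integrable_exp_max hM)
  set M : ℝ := ∫ x, exp (β * x) ∂μ₀ with hMdef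
  have hself : llr μ₀ μ₀ =ᵐ[μ₀] 0 := by
    filter_upwards [Measure.rnDeriv_self μ₀] with x hx
    simp [llr, hx]
  have hllr0 : llr μβ μ₀ =ᵐ[μ₀] fun x => β * x - log M := by
    have h1 := llr_tilted_left (Measure.AbsolutelyContinuous.refl μ₀) (hM β)
      ((measurable_const.mul measurable_id).aemeasurable (μ := μ₀))
    filter_upwards [h1, hself] with x hx1 hx2
    rw [hx1]; simp [hx2]; rfl
  have hllrβ : llr μβ μ₀ =ᵐ[μβ] fun x => β * x - log M := hllr0.filter_mono hac.ae_le
  set G : ℝ → ℝ := fun x => max x 0 - (β * x - log M) with hG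
  have hGint : Integrable G μβ :=
    (integrable_max_tilted hM β).sub
      (((integrable_id_tilted hM β).const_mul β).sub (integrable_const _))
  have hptwise : ∀ x : ℝ, exp (G x) * (exp (β * x) / M) = exp (max x 0) := by
    intro x
    rw [mul_div_assoc', ← exp_add, hG]
    have : max x 0 - (β * x - log M) + β * x = max x 0 + log M := by ring
    rw [this, exp_add, exp_log hMpos, mul_div_assoc, div_self hMpos.ne', mul_one]
  have hexpG : Integrable (fun x => exp (G x)) μβ := by
    rw [hμβ, integrable_tilted_iff β]
    refine (integrable_congr (ae_of_all _ fun x => ?_)).mpr (integrable_exp_max hM)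
    rw [← hMdef]; exact hptwise x
  have hJ : exp (∫ x, G x ∂μβ) ≤ ∫ x, exp (G x) ∂μβ :=
    convexOn_exp.map_integral_le continuous_exp.continuousOn isClosed_univ
      (ae_of_all _ fun _ => Set.mem_univ _) hGint hexpG
  have hZ : ∫ x, exp (G x) ∂μβ = ∫ x, exp (max x 0) ∂μ₀ := by
    rw [hμβ, integral_tilted]
    refine integral_congr_ae (ae_of_all _ fun x => ?_)
    simp only [smul_eq_mul]
    rw [← hMdef, mul_comm, hptwise x]
  have h2int : Integrable (fun x => β * x - log M) μβ :=
    ((integrable_id_tilted hM β).const_mul β).sub (integrable_const _)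
  have hGeq : ∫ x, G x ∂μβ
      = (∫ x, max x 0 ∂μβ) - ∫ x, llr μβ μ₀ x ∂μβ := by
    calc ∫ x, G x ∂μβ
        = (∫ x, max x 0 ∂μβ) - ∫ x, (β * x - log M) ∂μβ :=
          integral_sub (integrable_max_tilted hM β) h2int
      _ = (∫ x, max x 0 ∂μβ) - ∫ x, llr μβ μ₀ x ∂μβ := by
          rw [integral_congr_ae hllrβ]
  rw [hZ, hGeq] at hJ
  have := (Real.le_log_iff_exp_le hZpos).mpr hJ
  linarith

lemma eventually_max_ge (hM : ∀ lam : ℝ, Integrable (fun x => Real.exp (lam * x)) μ₀)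
    (hub : ∀ c : ℝ, μ₀ (Set.Ioi c) ≠ 0) (c : ℝ) (hc : 0 ≤ c) :
    ∀ᶠ β in atTop, c / 2 ≤ ∫ x, max x 0 ∂(μ₀.tilted (fun x => β * x)) := by
  set p : ℝ := (μ₀ (Set.Ioi (c + 1))).toReal with hpdef
  have hp : 0 < p := ENNReal.toReal_pos (hub _) (measure_ne_top _ _)
  filter_upwards [eventually_ge_atTop (max 0 (log (2 / p)))] with β hβ
  have hβ0 : 0 ≤ β := le_trans (le_max_left _ _) hβ
  have hβ1 : log (2 / p) ≤ β := le_trans (le_max_right _ _) hβ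
  set μβ := μ₀.tilted (fun x => β * x) with hμβ
  haveI : IsProbabilityMeasure μβ := isProbabilityMeasure_tilted (hM β)
  have hMpos : 0 < ∫ x, exp (β * x) ∂μ₀ := integral_exp_pos (hM β)
  set M : ℝ := ∫ x, exp (β * x) ∂μ₀ with hMdef
  have hnum : (∫ x in Set.Iic c, exp (β * x) ∂μ₀) ≤ exp (β * c) := by
    calc (∫ x in Set.Iic c, exp (β * x) ∂μ₀)
        ≤ ∫ _ in Set.Iic c, exp (β * c) ∂μ₀ := by
          refine setIntegral_mono_on (hM β).integrableOn
            ((integrableOn_const_iff).mpr (Or.inr (measure_lt_top _ _)))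
            measurableSet_Iic fun x hx => ?_
          exact exp_le_exp.mpr (mul_le_mul_of_nonneg_left hx hβ0)
      _ = (μ₀ (Set.Iic c)).toReal * exp (β * c) := by
          rw [setIntegral_const, smul_eq_mul]; rfl
      _ ≤ 1 * exp (β * c) := by
          refine mul_le_mul_of_nonneg_right ?_ (exp_pos _).le
          exact ENNReal.toReal_le_of_le_ofReal one_pos.le (by simpa using prob_le_one)
      _ = exp (β * c) := one_mul _
  have hden : exp (β * (c + 1)) * p ≤ M := by
    calc exp (β * (c + 1)) * p
        = ∫ _ in Set.Ioi (c + 1), exp (β * (c + 1)) ∂μ₀ := by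
          rw [setIntegral_const, smul_eq_mul, mul_comm]; rfl
      _ ≤ ∫ x in Set.Ioi (c + 1), exp (β * x) ∂μ₀ := by
          refine setIntegral_mono_on
            ((integrableOn_const_iff).mpr (Or.inr (measure_lt_top _ _)))
            (hM β).integrableOn measurableSet_Ioi fun x hx => ?_
          exact exp_le_exp.mpr (mul_le_mul_of_nonneg_left (le_of_lt hx) hβ0)
      _ ≤ M := setIntegral_le_integral (hM β) (ae_of_all _ fun x => (exp_pos _).le)
  have htail : (μβ (Set.Iic c)).toReal ≤ 1 / 2 := by
    have h1 : μβ (Set.Iic c)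
        = ENNReal.ofReal (∫ x in Set.Iic c, exp (β * x) / M ∂μ₀) := by
      rw [hμβ, tilted_apply_eq_ofReal_integral, ← hMdef]
    have h2 : (μβ (Set.Iic c)).toReal = (∫ x in Set.Iic c, exp (β * x) ∂μ₀) / M := by
      rw [h1, ENNReal.toReal_ofReal (setIntegral_nonneg measurableSet_Iic
        fun x _ => by positivity), integral_div]
    rw [h2]
    have h3 : (∫ x in Set.Iic c, exp (β * x) ∂μ₀) / M
        ≤ exp (β * c) / (exp (β * (c + 1)) * p) :=
      div_le_div₀ (exp_pos _).le hnum (by positivity) hden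
    have h4 : exp (β * c) / (exp (β * (c + 1)) * p) = exp (-β) / p := by
      rw [show β * (c + 1) = β * c + β by ring, exp_add, exp_neg]
      field_simp
    have h5 : exp (-β) / p ≤ 1 / 2 := by
      have : exp (-β) ≤ p / 2 := by
        have h6 : -β ≤ log (p / 2) := by
          rw [show p / 2 = (2 / p)⁻¹ by field_simp, log_inv]; linarith
        calc exp (-β) ≤ exp (log (p / 2)) := exp_le_exp.mpr h6
          _ = p / 2 := exp_log (by positivity)
      rw [div_le_div_iff₀ hp two_pos] at *
      linarith
    linarith
  have hIoi : 1 / 2 ≤ (μβ (Set.Ioi c)).toReal := by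
    have h1 : (μβ (Set.Ioi c)).toReal = 1 - (μβ (Set.Iic c)).toReal := by
      rw [show Set.Ioi c = (Set.Iic c)ᶜ from compl_Iic.symm,
        measure_compl measurableSet_Iic (measure_ne_top _ _), measure_univ,
        ENNReal.toReal_sub_of_le prob_le_one ENNReal.one_ne_top, ENNReal.toReal_one]
    rw [h1]; linarith
  calc c / 2 = (1 / 2) * c := by ring
    _ ≤ (μβ (Set.Ioi c)).toReal * c := mul_le_mul_of_nonneg_right hIoi hc
    _ = ∫ x, (Set.Ioi c).indicator (fun _ => c) x ∂μβ := by
        rw [integral_indicator_const _ measurableSet_Ioi, smul_eq_mul]; rfl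
    _ ≤ ∫ x, max x 0 ∂μβ := by
        refine integral_mono ((integrable_const c).indicator measurableSet_Ioi)
          (integrable_max_tilted hM β) fun x => ?_
        by_cases hx : x ∈ Set.Ioi c
        · rw [Set.indicator_of_mem hx]
          exact le_trans (le_of_lt hx) (le_max_left x 0)
        · rw [Set.indicator_of_notMem hx]
          exact le_max_right x 0

end Aux

/-- Let `μ₀` be a probability measure on `ℝ` with `M(λ) < ∞` for all `λ`
and support unbounded from above (`μ₀((c,∞)) > 0` for every `c`). With `μ_β` the
exponential tilt of `μ₀`, one has `lim_{β→∞} h(μ_β | μ₀) = ∞`. -/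
theorem stmt5 (μ₀ : Measure ℝ) [IsProbabilityMeasure μ₀]
    (hM : ∀ lam : ℝ, Integrable (fun x => Real.exp (lam * x)) μ₀)
    (hub : ∀ c : ℝ, μ₀ (Set.Ioi c) ≠ 0) :
    Tendsto (fun β : ℝ => relEnt (μ₀.tilted (fun x => β * x)) μ₀) atTop (𝓝 ⊤) := by
  refine ENNReal.tendsto_nhds_top fun n => ?_
  set Z : ℝ := ∫ x, exp (max x 0) ∂μ₀ with hZdef
  have hZ1 : (1:ℝ) ≤ Z := by
    calc (1:ℝ) = ∫ _, (1:ℝ) ∂μ₀ := by simp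
      _ ≤ Z := integral_mono (integrable_const 1) (integrable_exp_max hM)
          (fun x => by simpa using Real.one_le_exp (le_max_right x 0))
  have hlogZ : 0 ≤ log Z := log_nonneg hZ1
  set c : ℝ := 2 * ((n:ℝ) + log Z + 1) with hcdef
  have hc : 0 ≤ c := by positivity
  filter_upwards [eventually_max_ge hM hub c hc] with β hβ
  have hβ' : (n:ℝ) + log Z + 1 ≤ ∫ x, max x 0 ∂(μ₀.tilted (fun x => β * x)) := by
    calc (n:ℝ) + log Z + 1 = c / 2 := by rw [hcdef]; ring
      _ ≤ _ := hβ
  have hkey := key_lower_bound hM β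
  rw [relEnt]
  split_ifs with h
  · have hn : (n:ℝ) + 1 ≤ ∫ x, llr (μ₀.tilted (fun x => β * x)) μ₀ x
        ∂(μ₀.tilted (fun x => β * x)) := by
      rw [← hZdef] at hkey
      linarith
    calc (n:ℝ≥0∞) = ENNReal.ofReal (n:ℝ) := (ENNReal.ofReal_natCast n).symm
      _ < ENNReal.ofReal (∫ x, llr (μ₀.tilted (fun x => β * x)) μ₀ x
          ∂(μ₀.tilted (fun x => β * x))) := by
          have h0 : (0:ℝ) ≤ (n:ℝ) := Nat.cast_nonneg n
          rw [ENNReal.ofReal_lt_ofReal_iff (by linarith)]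
          linarith
  · exact ENNReal.natCast_lt_top n
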